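/- arXiv:2503.18410 — 3 statements merged into one kernel-verified Lean document; each statement's English description precedes it below -/
import Mathlib

section
/- For every q > N there exists C_q > 0, independent of ε, such that for all sufficiently small ε > 0 and all y ∈ ℝ^N one has |Φ_ε(y) − Φ_ε(0)| ≤ C_q·ε^{N/q}·|y|^{2−N/q}. -/
noncomputable section

open Real MeasureTheory Filter Set

abbrev Euc (N : ℕ) := EuclideanSpace ℝ (Fin N)

/-- The coordinate vector with a `1` in coordinate `n` (and `0` elsewhere). -/
noncomputable def evec {N : ℕ} (n : ℕ) : Euc N := WithLp.toLp 2 (fun i => if (i : ℕ) = n then (1:ℝ) else 0)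

/-- The Laplacian, expressed through the second iterated Fréchet derivative. -/
noncomputable def lap {N : ℕ} (f : Euc N → ℝ) (y : Euc N) : ℝ :=
  ∑ i : Fin N, iteratedFDeriv ℝ 2 f y ![evec (i : ℕ), evec (i : ℕ)]

/-- The partial derivative in the `n`-th coordinate direction. -/
noncomputable def pd {N : ℕ} (n : ℕ) (f : Euc N → ℝ) (y : Euc N) : ℝ :=
  fderiv ℝ f y (evec n)

/-- `f` is even in each coordinate. -/
def EvenEach {N : ℕ} (f : Euc N → ℝ) : Prop :=
  ∀ (y : Euc N) (i : Fin N), f (WithLp.toLp 2 (fun j => if j = i then -(y j) else y j)) = f y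

/-- `f` is radially symmetric. -/
def Radial {N : ℕ} (f : Euc N → ℝ) : Prop :=
  ∀ x y : Euc N, ‖x‖ = ‖y‖ → f x = f y

/-- Membership in `H¹(ℝ^N)`. -/
def MemH1 {N : ℕ} (f : Euc N → ℝ) : Prop :=
  MemLp f 2 (volume : Measure (Euc N)) ∧
    MemLp (fun y => ‖fderiv ℝ f y‖) 2 (volume : Measure (Euc N))

/-- Membership in `H²(ℝ^N)`. -/
def MemH2 {N : ℕ} (f : Euc N → ℝ) : Prop :=
  MemH1 f ∧ MemLp (fun y => ‖iteratedFDeriv ℝ 2 f y‖) 2 (volume : Measure (Euc N))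

/-- Rotation by angle `θ` in the `(y₁,y₂)`-plane, identity on the other coordinates. -/
noncomputable def rot {N : ℕ} (θ : ℝ) (y : Euc N) : Euc N := WithLp.toLp 2 (fun i =>
  if (i : ℕ) = 0 then Real.cos θ * y i + Real.sin θ * y ⟨1 % N, Nat.mod_lt 1 i.pos⟩
  else if (i : ℕ) = 1 then -Real.sin θ * y ⟨0, i.pos⟩ + Real.cos θ * y i
  else y i)

/-- Vertices of a regular `k`-gon of radius `ρ` in the `(y₁,y₂)`-plane (`0`-indexed:
`peak k ρ j` is the paper's `P_{j+1}`). -/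
noncomputable def peak {N : ℕ} (k : ℕ) (ρ : ℝ) (j : ℕ) : Euc N := WithLp.toLp 2 (fun i =>
  if (i : ℕ) = 0 then ρ * Real.cos (2 * π * j / k)
  else if (i : ℕ) = 1 then ρ * Real.sin (2 * π * j / k)
  else 0)

/-- `f` is even in each coordinate and invariant under the rotation `R_{2π/k}`. -/
def Symm {N : ℕ} (k : ℕ) (f : Euc N → ℝ) : Prop :=
  EvenEach f ∧ ∀ y, f (rot (2 * π / k) y) = f y

/-- `f` is symmetric and moreover invariant under each rotation `R̂_i = R_{2πi/(mk)}`,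
`i = 1, …, m-1` (the paper's `i = 2, …, m`). -/
def FullSymm {N : ℕ} (k m : ℕ) (f : Euc N → ℝ) : Prop :=
  Symm k f ∧ ∀ i ∈ Finset.Ico 1 m, ∀ y, f (rot (2 * π * i / (m * k)) y) = f y

/-- All the data of the Lyapunov–Schmidt scheme of the paper. -/
structure Setting (N : ℕ) where
  μ₁ : ℝ
  μ₂ : ℝ
  β : ℝ
  α : ℝ
  ω₀ : ℝ
  V : Euc N → ℝ
  W : Euc N → ℝ
  Y : Euc N → ℝ
  U : Euc N → ℝ
  k : ℕ
  m : ℕ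
  d : ℝ

namespace Setting

variable {N : ℕ} (S : Setting N)

/-- The shadow potential `ω = W - βY²`. -/
noncomputable def ω (y : Euc N) : ℝ := S.W y - S.β * S.Y y ^ 2

/-- `ρ = ρ_ε = d·ε·|log ε|`. -/
noncomputable def ρ (ε : ℝ) : ℝ := S.d * ε * |Real.log ε|

/-- The scaled peaks `P_j/ε` (`0`-indexed: `Pj ε j` is the paper's `P_{j+1}/ε`). -/
noncomputable def Pj (ε : ℝ) (j : ℕ) : Euc N := ε⁻¹ • peak S.k (S.ρ ε) j

/-- The sum of bubbles `U_{ρ,ε}`. -/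
noncomputable def Urho (ε : ℝ) (y : Euc N) : ℝ :=
  ∑ j ∈ Finset.range S.k, S.U (y - S.Pj ε j)

/-- The rotations `R̂` (`Rhat i` is the paper's `R̂_{i+1}`, i.e. `Rhat 0 = id`). -/
noncomputable def Rhat (i : ℕ) (y : Euc N) : Euc N := rot (2 * π * i / (S.m * S.k)) y

/-- `Υ_ε = Y + βΦ_ε`. -/
noncomputable def Upsilon (Φ : Euc N → ℝ) (y : Euc N) : ℝ := S.Y y + S.β * Φ y

/-- `Θ_ε = U_{ρ,ε} + βΨ_ε`. -/
noncomputable def Theta (Ψ : Euc N → ℝ) (ε : ℝ) (y : Euc N) : ℝ := S.Urho ε y + S.β * Ψ y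

/-- `Z_{ε,j}` (`0`-indexed in `j`). -/
noncomputable def Zj (ε : ℝ) (j : ℕ) (y : Euc N) : ℝ :=
  -(Real.cos (2 * π * j / S.k) * pd 0 S.U (y - S.Pj ε j)
    + Real.sin (2 * π * j / S.k) * pd 1 S.U (y - S.Pj ε j))

/-- `Z_ε = Σ_j Z_{ε,j}`. -/
noncomputable def Z (ε : ℝ) (y : Euc N) : ℝ := ∑ j ∈ Finset.range S.k, S.Zj ε j y

/-- The source term of the equation defining `Φ_ε`. -/
noncomputable def Fsrc (ε : ℝ) (y : Euc N) : ℝ :=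
  S.Y y * ∑ i ∈ Finset.range S.m, (S.Urho ε (S.Rhat i (ε⁻¹ • y))) ^ 2

/-- `Φ` is the correction term `Φ_ε`: fully symmetric `H²` solution of its defining equation. -/
def IsPhi (ε : ℝ) (Φ : Euc N → ℝ) : Prop :=
  MemH2 Φ ∧ FullSymm S.k S.m Φ ∧
    ∀ y, -lap Φ y + (S.V y - 3 * S.μ₁ * S.Y y ^ 2) * Φ y = S.Fsrc ε y

/-- `Ψ` is the correction term `Ψ_ε` (relative to `Φ = Φ_ε`): symmetric `H²` solution of its
defining equation. -/
def IsPsi (ε : ℝ) (Φ Ψ : Euc N → ℝ) : Prop :=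
  MemH2 Ψ ∧ Symm S.k Ψ ∧
    ∀ y, -lap Ψ y
        + (S.ω₀ - 3 * S.μ₂ * ∑ j ∈ Finset.range S.k, (S.U (y - S.Pj ε j)) ^ 2) * Ψ y
      = 2 * S.β * Φ 0 * S.Y 0 * ∑ j ∈ Finset.range S.k, S.U (y - S.Pj ε j)

/-- The linear operator `L₁`. -/
noncomputable def L1 (Φ Ψ : Euc N → ℝ) (ε : ℝ) (φ ψ : Euc N → ℝ) (y : Euc N) : ℝ :=
  -lap φ y + S.V y * φ y
    - (3 * S.μ₁ * (S.Upsilon Φ y) ^ 2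
        + S.β * ∑ i ∈ Finset.range S.m, (S.Theta Ψ ε (S.Rhat i (ε⁻¹ • y))) ^ 2) * φ y
    - 2 * S.β * S.Upsilon Φ y *
        ∑ i ∈ Finset.range S.m, S.Theta Ψ ε (S.Rhat i (ε⁻¹ • y)) * ψ (S.Rhat i (ε⁻¹ • y))

/-- The linear operator `L₂`. -/
noncomputable def L2 (Φ Ψ : Euc N → ℝ) (ε : ℝ) (φ ψ : Euc N → ℝ) (y : Euc N) : ℝ :=
  -lap ψ y + S.W (ε • y) * ψ y
    - (3 * S.μ₂ * (S.Theta Ψ ε y) ^ 2 + S.β * (S.Upsilon Φ (ε • y)) ^ 2) * ψ y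
    - 2 * S.β * S.Theta Ψ ε y * S.Upsilon Φ (ε • y) * φ (ε • y)
    - 2 * S.α * S.Theta Ψ ε y *
        ∑ i ∈ Finset.Ico 1 S.m, S.Theta Ψ ε (S.Rhat i y) * ψ (S.Rhat i y)
    - S.α * ψ y * ∑ i ∈ Finset.Ico 1 S.m, (S.Theta Ψ ε (S.Rhat i y)) ^ 2

/-- The error term `E₁`. -/
noncomputable def E1 (Φ Ψ : Euc N → ℝ) (ε : ℝ) (y : Euc N) : ℝ :=
  3 * S.μ₁ * S.β ^ 2 * (Φ y) ^ 2 * S.Y y + S.μ₁ * S.β ^ 3 * (Φ y) ^ 3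
    + S.β ^ 3 * S.Y y * ∑ i ∈ Finset.range S.m, (Ψ (S.Rhat i (ε⁻¹ • y))) ^ 2
    + 2 * S.β ^ 2 * S.Y y *
        ∑ i ∈ Finset.range S.m, S.Urho ε (S.Rhat i (ε⁻¹ • y)) * Ψ (S.Rhat i (ε⁻¹ • y))
    + S.β ^ 2 * Φ y *
        ∑ i ∈ Finset.range S.m,
          ((S.Urho ε (S.Rhat i (ε⁻¹ • y))) ^ 2
            + 2 * S.β * S.Urho ε (S.Rhat i (ε⁻¹ • y)) * Ψ (S.Rhat i (ε⁻¹ • y))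
            + S.β ^ 2 * (Ψ (S.Rhat i (ε⁻¹ • y))) ^ 2)

/-- The error term `E₂`. -/
noncomputable def E2 (Φ Ψ : Euc N → ℝ) (ε : ℝ) (y : Euc N) : ℝ :=
  (S.ω₀ - S.ω (ε • y)) * S.Theta Ψ ε y
    + 2 * S.β ^ 2 * S.Urho ε y * (S.Y (ε • y) * Φ (ε • y) - S.Y 0 * Φ 0)
    + S.β ^ 3 * (Φ (ε • y)) ^ 2 * S.Theta Ψ ε y
    + 2 * S.β ^ 3 * Ψ y * S.Y (ε • y) * Φ (ε • y)
    + 3 * S.μ₂ * S.β ^ 2 * S.Urho ε y * (Ψ y) ^ 2 + S.μ₂ * S.β ^ 3 * (Ψ y) ^ 3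
    + S.μ₂ * ((S.Urho ε y) ^ 3 - ∑ j ∈ Finset.range S.k, (S.U (y - S.Pj ε j)) ^ 3)
    + 3 * S.μ₂ * S.β * Ψ y *
        ((S.Urho ε y) ^ 2 - ∑ j ∈ Finset.range S.k, (S.U (y - S.Pj ε j)) ^ 2)
    + S.α * S.Theta Ψ ε y * ∑ i ∈ Finset.Ico 1 S.m, (S.Theta Ψ ε (S.Rhat i y)) ^ 2

/-- The nonlinear term `N₁`. -/
noncomputable def N1 (Φ Ψ : Euc N → ℝ) (ε : ℝ) (φ ψ : Euc N → ℝ) (y : Euc N) : ℝ :=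
  S.μ₁ * (φ y) ^ 2 * (3 * S.Upsilon Φ y + φ y)
    + S.β * S.Upsilon Φ y * ∑ i ∈ Finset.range S.m, (ψ (S.Rhat i (ε⁻¹ • y))) ^ 2
    + S.β * φ y *
        ∑ i ∈ Finset.range S.m,
          (2 * S.Theta Ψ ε (S.Rhat i (ε⁻¹ • y)) * ψ (S.Rhat i (ε⁻¹ • y))
            + (ψ (S.Rhat i (ε⁻¹ • y))) ^ 2)

/-- The nonlinear term `N₂`. -/
noncomputable def N2 (Φ Ψ : Euc N → ℝ) (ε : ℝ) (φ ψ : Euc N → ℝ) (y : Euc N) : ℝ :=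
  S.μ₂ * (ψ y) ^ 2 * (3 * S.Theta Ψ ε y + ψ y)
    + S.β * ψ y * φ (ε • y) * (2 * S.Upsilon Φ (ε • y) + φ (ε • y))
    + S.β * S.Theta Ψ ε y * (φ (ε • y)) ^ 2
    + S.α * S.Theta Ψ ε y * ∑ i ∈ Finset.Ico 1 S.m, (ψ (S.Rhat i y)) ^ 2
    + S.α * ψ y *
        ∑ i ∈ Finset.Ico 1 S.m,
          (2 * S.Theta Ψ ε (S.Rhat i y) * ψ (S.Rhat i y) + (ψ (S.Rhat i y)) ^ 2)

/-- The `‖·‖_V` norm. -/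
noncomputable def normV (φ : Euc N → ℝ) : ℝ :=
  Real.sqrt (∫ y, (‖iteratedFDeriv ℝ 2 φ y‖ ^ 2 + ‖fderiv ℝ φ y‖ ^ 2 + S.V y * (φ y) ^ 2))

/-- The `‖·‖_{W_ε}` norm. -/
noncomputable def normW (ε : ℝ) (ψ : Euc N → ℝ) : ℝ :=
  Real.sqrt (∫ y, (‖iteratedFDeriv ℝ 2 ψ y‖ ^ 2 + ‖fderiv ℝ ψ y‖ ^ 2 + S.W (ε • y) * (ψ y) ^ 2))

/-- Finiteness of the `‖·‖_V` norm. -/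
def FinV (φ : Euc N → ℝ) : Prop :=
  Integrable (fun y => ‖iteratedFDeriv ℝ 2 φ y‖ ^ 2 + ‖fderiv ℝ φ y‖ ^ 2 + S.V y * (φ y) ^ 2)

/-- Finiteness of the `‖·‖_{W_ε}` norm. -/
def FinW (ε : ℝ) (ψ : Euc N → ℝ) : Prop :=
  Integrable (fun y => ‖iteratedFDeriv ℝ 2 ψ y‖ ^ 2 + ‖fderiv ℝ ψ y‖ ^ 2 + S.W (ε • y) * (ψ y) ^ 2)

/-- The balance quantity for `α = 0`:
`e^{-2√ω₀ (ρ/ε) sin(π/k)} (ρ/ε)^{-(N-1)/2}`. -/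
noncomputable def bal0 (ε : ℝ) : ℝ :=
  Real.exp (-2 * Real.sqrt S.ω₀ * (S.ρ ε / ε) * Real.sin (π / S.k))
    * (S.ρ ε / ε) ^ (-(((N : ℝ) - 1) / 2))

/-- The balance quantity for `α ≠ 0`. -/
noncomputable def balα (ε : ℝ) : ℝ :=
  if N = 2 then
    Real.exp (-4 * Real.sqrt S.ω₀ * (S.ρ ε / ε) * Real.sin (π / (S.m * S.k)))
      * (S.ρ ε / ε) ^ (-(1 / 2 : ℝ))
  else
    Real.exp (-4 * Real.sqrt S.ω₀ * (S.ρ ε / ε) * Real.sin (π / (S.m * S.k)))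
      * (S.ρ ε / ε) ^ (-(2 : ℝ)) * Real.log (S.ρ ε / ε)

/-- The quantity `e^{-2√ω₀ (ρ/ε) sin(π/(mk))} (ρ/ε)^{-(N-1)/2}` appearing in the remainder
estimates when `α ≠ 0`. -/
noncomputable def bndα (ε : ℝ) : ℝ :=
  Real.exp (-2 * Real.sqrt S.ω₀ * (S.ρ ε / ε) * Real.sin (π / (S.m * S.k)))
    * (S.ρ ε / ε) ^ (-(((N : ℝ) - 1) / 2))

/-- The balance condition when `α = 0`:  `ε·ρ ~ bal0 ε`, two-sided. -/
def Balance0 (S : Setting N) : Prop :=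
  ∃ ε' > 0, ∃ c₁ > 0, ∃ c₂ > 0, ∀ ε ∈ Set.Ioo (0 : ℝ) ε',
    c₁ * S.bal0 ε ≤ ε * S.ρ ε ∧ ε * S.ρ ε ≤ c₂ * S.bal0 ε

/-- The balance condition when `α ≠ 0`:  `ε·ρ ~ balα ε`, two-sided. -/
def Balanceα (S : Setting N) : Prop :=
  ∃ ε' > 0, ∃ c₁ > 0, ∃ c₂ > 0, ∀ ε ∈ Set.Ioo (0 : ℝ) ε',
    c₁ * S.balα ε ≤ ε * S.ρ ε ∧ ε * S.ρ ε ≤ c₂ * S.balα ε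

end Setting

/-- The `L²(ℝ^N)` norm. -/
noncomputable def l2norm {N : ℕ} (f : Euc N → ℝ) : ℝ := Real.sqrt (∫ y, (f y) ^ 2)

/-- The standing assumptions of the paper. -/
structure Hyps {N : ℕ} (S : Setting N) : Prop where
  hN : N = 2 ∨ N = 3
  hμ₁ : 0 < S.μ₁
  hμ₂ : 0 < S.μ₂
  hβ : S.β < 0
  hk : 2 ≤ S.k
  hkeven : Even S.k
  hm : 1 ≤ S.m
  hd : 0 < S.d
  hVc : Continuous S.V
  hVrad : Radial S.V
  hVpos : ∃ c > 0, ∀ y, c ≤ S.V y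
  hY3 : ContDiff ℝ 3 S.Y
  hYpos : ∀ y, 0 < S.Y y
  hYrad : Radial S.Y
  hYH2 : MemH2 S.Y
  hYeq : ∀ y, -lap S.Y y + S.V y * S.Y y = S.μ₁ * S.Y y ^ 3
  hYnd : ∀ h : Euc N → ℝ, MemH1 h →
    (∀ y, -lap h y + S.V y * h y = 3 * S.μ₁ * S.Y y ^ 2 * h y) → EvenEach h → h = 0
  hW3 : ContDiff ℝ 3 S.W
  hWrad : Radial S.W
  hWpos : ∃ c > 0, ∀ y, c ≤ S.W y
  hWbdd : ∀ n : ℕ, n ≤ 3 → ∃ C, ∀ y, ‖iteratedFDeriv ℝ n S.W y‖ ≤ C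
  hω₀ : S.ω₀ = S.ω 0
  hω₀pos : 0 < S.ω₀
  hUpos : ∀ y, 0 < S.U y
  hUrad : Radial S.U
  hUH1 : MemH1 S.U
  hU2 : ContDiff ℝ 2 S.U
  hUeq : ∀ y, -lap S.U y + S.ω₀ * S.U y = S.μ₂ * S.U y ^ 3
  hUasymp : ∃ C₀ > 0, Filter.Tendsto
    (fun y : Euc N => S.U y * Real.exp (Real.sqrt S.ω₀ * ‖y‖) * ‖y‖ ^ (((N : ℝ) - 1) / 2))
    (Filter.comap norm Filter.atTop) (nhds C₀)
/-- **Remark 2.2.** Pointwise estimate `|Φ_ε(y) - Φ_ε(0)| ≲ ε^{N/q} |y|^{2-N/q}`,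
deduced from `∇Φ_ε(0) = 0` and the `C^{1,1-N/q}` bound on `Φ_ε`. -/
theorem Phi_pointwise_estimate
    (N : ℕ) (S : Setting N) (H : Hyps S)
    (ε₁ : ℝ) (hε₁ : 0 < ε₁) (Φ : ℝ → Euc N → ℝ)
    (hΦ : ∀ ε ∈ Set.Ioo (0 : ℝ) ε₁, S.IsPhi ε (Φ ε))
    (hΦC1 : ∀ ε ∈ Set.Ioo (0 : ℝ) ε₁, ContDiff ℝ 1 (Φ ε))
    (hΦgrad : ∀ ε ∈ Set.Ioo (0 : ℝ) ε₁, fderiv ℝ (Φ ε) 0 = 0)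
    (hΦbd : ∀ q : ℝ, (N : ℝ) < q → ∃ C > 0, ∀ ε ∈ Set.Ioo (0 : ℝ) ε₁,
      (∀ y, |Φ ε y| ≤ C * ε ^ ((N : ℝ) / q)) ∧
      (∀ y, ‖fderiv ℝ (Φ ε) y‖ ≤ C * ε ^ ((N : ℝ) / q)) ∧
      (∀ x y : Euc N, ‖fderiv ℝ (Φ ε) x - fderiv ℝ (Φ ε) y‖
          ≤ C * ε ^ ((N : ℝ) / q) * ‖x - y‖ ^ (1 - (N : ℝ) / q))) :
    ∀ q : ℝ, (N : ℝ) < q → ∃ C > 0, ∃ ε₀, 0 < ε₀ ∧ ε₀ ≤ ε₁ ∧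
      ∀ ε ∈ Set.Ioo (0 : ℝ) ε₀, ∀ y : Euc N,
        |Φ ε y - Φ ε 0| ≤ C * ε ^ ((N : ℝ) / q) * ‖y‖ ^ (2 - (N : ℝ) / q) := by
  intro q hq
  obtain ⟨C, hC, hbd⟩ := hΦbd q hq
  have hN : (0:ℝ) < N := by rcases H.hN with h | h <;> simp [h]
  have hqpos : (0:ℝ) < q := lt_trans hN hq
  have haq : 0 < (N : ℝ) / q := div_pos hN hqpos
  have haq1 : (N : ℝ) / q < 1 := by rw [div_lt_one hqpos]; exact hq
  refine ⟨C, hC, ε₁, hε₁, le_refl _, fun ε hε y => ?_⟩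
  obtain ⟨_, _, hHold⟩ := hbd ε hε
  by_cases hy : y = 0
  · subst hy
    simp only [sub_self, abs_zero, norm_zero]
    rw [Real.zero_rpow (by linarith)]
    simp
  have hy0 : 0 < ‖y‖ := norm_pos_iff.mpr hy
  have hdiff : ∀ x ∈ Metric.closedBall (0 : Euc N) ‖y‖, DifferentiableAt ℝ (Φ ε) x :=
    fun x _ => ((hΦC1 ε hε).differentiable (by norm_num)).differentiableAt
  have hgrad : ∀ x ∈ Metric.closedBall (0 : Euc N) ‖y‖,
      ‖fderiv ℝ (Φ ε) x‖ ≤ C * ε ^ ((N : ℝ) / q) * ‖y‖ ^ (1 - (N : ℝ) / q) := by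
    intro x hx
    have h1 : ‖fderiv ℝ (Φ ε) x‖ = ‖fderiv ℝ (Φ ε) x - fderiv ℝ (Φ ε) 0‖ := by
      rw [hΦgrad ε hε, sub_zero]
    rw [h1]
    calc ‖fderiv ℝ (Φ ε) x - fderiv ℝ (Φ ε) 0‖
        ≤ C * ε ^ ((N : ℝ) / q) * ‖x - 0‖ ^ (1 - (N : ℝ) / q) := hHold x 0
      _ ≤ C * ε ^ ((N : ℝ) / q) * ‖y‖ ^ (1 - (N : ℝ) / q) := by
          apply mul_le_mul_of_nonneg_left
          · apply Real.rpow_le_rpow (norm_nonneg _) _ (by linarith)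
            simpa using Metric.mem_closedBall.mp hx
          · have hεpos := hε.1
            positivity
  have hmem0 : (0 : Euc N) ∈ Metric.closedBall (0 : Euc N) ‖y‖ :=
    Metric.mem_closedBall_self hy0.le
  have hmemy : y ∈ Metric.closedBall (0 : Euc N) ‖y‖ := by
    simp [Metric.mem_closedBall, dist_zero_right]
  have key : ‖Φ ε y - Φ ε 0‖ ≤ C * ε ^ ((N : ℝ) / q) * ‖y‖ ^ (1 - (N : ℝ) / q) * ‖y - 0‖ :=
    (convex_closedBall (0 : Euc N) ‖y‖).norm_image_sub_le_of_norm_fderiv_le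
      hdiff hgrad hmem0 hmemy
  calc |Φ ε y - Φ ε 0| = ‖Φ ε y - Φ ε 0‖ := rfl
    _ ≤ C * ε ^ ((N : ℝ) / q) * ‖y‖ ^ (1 - (N : ℝ) / q) * ‖y - 0‖ := key
    _ = C * ε ^ ((N : ℝ) / q) * ‖y‖ ^ (2 - (N : ℝ) / q) := by
        rw [sub_zero, mul_assoc, ← Real.rpow_add_one hy0.ne']
        ring_nf
end
end

section
/- Let u, v : ℝ^N → ℝ be positive continuous radial functions, a, a′ ∈ ℝ and 0 < b < b′, and suppose there exist R₀ > 0 and constants 0 < k₁ ≤ k₂ such that k₁·|x|^a·e^{−b|x|} ≤ u(x) ≤ k₂·|x|^a·e^{−b|x|} and k₁·|x|^{a′}·e^{−b′|x|} ≤ v(x) ≤ k₂·|x|^{a′}·e^{−b′|x|} for all |x| ≥ R₀. Then there exist R ≥ R₀ and constants 0 < c₁ ≤ c₂ such that for every ξ ∈ ℝ^N with |ξ| ≥ R, c₁·e^{−b|ξ|}·|ξ|^a ≤ ∫_{ℝ^N} u(x + ξ)·v(x) dx ≤ c₂·e^{−b|ξ|}·|ξ|^a. -/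
noncomputable section

open Real MeasureTheory Filter Set

set_option maxHeartbeats 1000000

lemma aux_sup (s β : ℝ) (hβ : 0 < β) :
    ∃ C : ℝ, 0 < C ∧ ∀ t : ℝ, 0 ≤ t → (1 + t) ^ s * Real.exp (-β * t) ≤ C := by
  have h0 : Tendsto (fun t : ℝ => (1 + t) ^ s * Real.exp (-β * (1 + t))) atTop (nhds 0) := by
    have := tendsto_rpow_mul_exp_neg_mul_atTop_nhds_zero s β hβ
    exact this.comp (tendsto_atTop_add_const_left _ 1 tendsto_id)
  have h1 : Tendsto (fun t : ℝ => (1 + t) ^ s * Real.exp (-β * t)) atTop (nhds 0) := by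
    have : (fun t : ℝ => (1 + t) ^ s * Real.exp (-β * t))
        = fun t : ℝ => ((1 + t) ^ s * Real.exp (-β * (1 + t))) * Real.exp β := by
      funext t; rw [mul_assoc, ← Real.exp_add]; ring_nf
    rw [this]
    simpa using h0.mul_const (Real.exp β)
  obtain ⟨T, hT⟩ := (h1.eventually (eventually_le_nhds (show (0:ℝ) < 1 by norm_num))).exists_forall_of_atTop
  have hc : ContinuousOn (fun t : ℝ => (1 + t) ^ s * Real.exp (-β * t)) (Icc 0 T) := by
    apply ContinuousOn.mul
    · exact (continuousOn_const.add continuousOn_id).rpow_const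
        (fun x hx => Or.inl (by have := hx.1; show (1:ℝ) + x ≠ 0; positivity))
    · exact (Real.continuous_exp.comp (continuous_const.mul continuous_id)).continuousOn
  obtain ⟨C₀, hC₀⟩ := (isCompact_Icc (a := (0:ℝ)) (b := T)).exists_bound_of_continuousOn hc
  refine ⟨max C₀ 1, lt_of_lt_of_le one_pos (le_max_right _ _), fun t ht => ?_⟩
  rcases le_total t T with h | h
  · exact le_trans (le_of_abs_le (hC₀ t ⟨ht, h⟩)) (le_max_left _ _)
  · exact le_trans (hT t h) (le_max_right _ _)

lemma aux_int (N : ℕ) (s β : ℝ) (hβ : 0 < β) :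
    Integrable (fun x : Euc N => (1 + ‖x‖) ^ s * Real.exp (-β * ‖x‖)) := by
  obtain ⟨C, hC, hCb⟩ := aux_sup (s + (N + 1)) β hβ
  have hint : Integrable (fun x : Euc N => C * (1 + ‖x‖) ^ (-((N:ℝ) + 1))) := by
    refine (integrable_one_add_norm ?_).const_mul C
    rw [finrank_euclideanSpace_fin]; norm_num
  refine hint.mono' ?_ (Eventually.of_forall fun x => ?_)
  · apply Continuous.aestronglyMeasurable
    apply Continuous.mul
    · exact (continuous_const.add continuous_norm).rpow_const
        (fun x => Or.inl (by show (1:ℝ) + ‖x‖ ≠ 0; positivity))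
    · exact Real.continuous_exp.comp (continuous_const.mul continuous_norm)
  · have hx : (0:ℝ) < 1 + ‖x‖ := by positivity
    rw [Real.norm_of_nonneg (by positivity)]
    have : (1 + ‖x‖) ^ s = (1 + ‖x‖) ^ (s + ((N:ℝ)+1)) * (1 + ‖x‖) ^ (-((N:ℝ)+1)) := by
      rw [← Real.rpow_add hx]; ring_nf
    rw [this]
    have h2 : (1 + ‖x‖) ^ (s + ((N:ℝ)+1)) * Real.exp (-β * ‖x‖) ≤ C :=
      hCb ‖x‖ (norm_nonneg x)
    calc (1 + ‖x‖) ^ (s + ((N:ℝ)+1)) * (1 + ‖x‖) ^ (-((N:ℝ)+1)) * Real.exp (-β * ‖x‖)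
        = ((1 + ‖x‖) ^ (s + ((N:ℝ)+1)) * Real.exp (-β * ‖x‖)) * (1 + ‖x‖) ^ (-((N:ℝ)+1)) := by ring
      _ ≤ C * (1 + ‖x‖) ^ (-((N:ℝ)+1)) := by
          apply mul_le_mul_of_nonneg_right h2 (Real.rpow_nonneg (by positivity) _)

-- comparison of rpow on dyadic interval
lemma aux_rpow_ub (a T t : ℝ) (hT : 0 < T) (h1 : T/2 ≤ t) (h2 : t ≤ 2*T) :
    t ^ a ≤ max ((2:ℝ)^a) ((2:ℝ)^(-a)) * T ^ a := by
  have ht : 0 < t := lt_of_lt_of_le (by linarith) h1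
  rcases le_total 0 a with ha | ha
  · calc t ^ a ≤ (2*T) ^ a := Real.rpow_le_rpow ht.le h2 ha
      _ = 2^a * T^a := Real.mul_rpow (by norm_num) hT.le
      _ ≤ _ := mul_le_mul_of_nonneg_right (le_max_left _ _) (Real.rpow_nonneg hT.le a)
  · calc t ^ a ≤ (T/2) ^ a := Real.rpow_le_rpow_of_nonpos (by linarith) h1 ha
      _ = 2^(-a) * T^a := by
          rw [div_eq_mul_inv, Real.mul_rpow hT.le (by norm_num),
            Real.inv_rpow (by norm_num), ← Real.rpow_neg (by norm_num)]; ring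
      _ ≤ _ := mul_le_mul_of_nonneg_right (le_max_right _ _) (Real.rpow_nonneg hT.le a)

lemma aux_rpow_lb (a T t : ℝ) (hT : 0 < T) (h1 : T/2 ≤ t) (h2 : t ≤ 2*T) :
    min ((2:ℝ)^a) ((2:ℝ)^(-a)) * T ^ a ≤ t ^ a := by
  have ht : 0 < t := lt_of_lt_of_le (by linarith) h1
  rcases le_total 0 a with ha | ha
  · calc min ((2:ℝ)^a) ((2:ℝ)^(-a)) * T ^ a ≤ 2^(-a) * T^a :=
        mul_le_mul_of_nonneg_right (min_le_right _ _) (Real.rpow_nonneg hT.le a)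
      _ = (T/2) ^ a := by
          rw [div_eq_mul_inv, Real.mul_rpow hT.le (by norm_num),
            Real.inv_rpow (by norm_num), ← Real.rpow_neg (by norm_num)]; ring
      _ ≤ t ^ a := Real.rpow_le_rpow (by positivity) h1 ha
  · calc min ((2:ℝ)^a) ((2:ℝ)^(-a)) * T ^ a ≤ 2^a * T^a :=
        mul_le_mul_of_nonneg_right (min_le_left _ _) (Real.rpow_nonneg hT.le a)
      _ = (2*T) ^ a := (Real.mul_rpow (by norm_num) hT.le).symm
      _ ≤ t ^ a := Real.rpow_le_rpow_of_nonpos ht h2 ha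

lemma aux_global (N : ℕ) (u : Euc N → ℝ) (hu : Continuous u)
    (a b R₀ k₂ : ℝ) (hb : 0 < b) (hR₀ : 0 < R₀) (hk₂ : 0 < k₂)
    (hub : ∀ x : Euc N, R₀ ≤ ‖x‖ → u x ≤ k₂ * ‖x‖ ^ a * Real.exp (-b * ‖x‖)) :
    ∃ K : ℝ, 0 < K ∧ ∀ y : Euc N,
      u y ≤ K * (1 + ‖y‖) ^ (max a 0) * Real.exp (-b * ‖y‖) := by
  obtain ⟨U, hU⟩ := (isCompact_closedBall (0 : Euc N) R₀).exists_bound_of_continuousOn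
    hu.continuousOn
  set p := max a 0 with hp
  refine ⟨max (max U 0 * Real.exp (b * R₀)) (k₂ * max (R₀ ^ a) 1), by positivity,
    fun y => ?_⟩
  have h1p : (1:ℝ) ≤ (1 + ‖y‖) ^ p :=
    Real.one_le_rpow (by linarith [norm_nonneg y]) (le_max_right a 0)
  have hep : 0 < Real.exp (-b * ‖y‖) := Real.exp_pos _
  rcases le_total ‖y‖ R₀ with h | h
  · have hy : u y ≤ max U 0 := by
      have := hU y (by simpa [Metric.mem_closedBall, dist_zero_right] using h)
      exact le_trans (le_abs_self _) (le_max_of_le_left this)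
    have he : Real.exp (b * R₀) * Real.exp (-b * ‖y‖) ≥ 1 := by
      rw [← Real.exp_add, ← Real.exp_zero]
      apply Real.exp_le_exp.2; nlinarith [norm_nonneg y]
    calc u y ≤ max U 0 := hy
      _ = max U 0 * 1 := by ring
      _ ≤ max U 0 * ((Real.exp (b*R₀) * Real.exp (-b*‖y‖)) * (1 + ‖y‖) ^ p) := by
          apply mul_le_mul_of_nonneg_left _ (le_max_right U 0)
          nlinarith [Real.exp_pos (b*R₀), Real.exp_pos (-b*‖y‖)]
      _ ≤ max (max U 0 * Real.exp (b * R₀)) (k₂ * max (R₀ ^ a) 1)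
            * (1 + ‖y‖) ^ p * Real.exp (-b * ‖y‖) := by
          have : max U 0 * ((Real.exp (b*R₀) * Real.exp (-b*‖y‖)) * (1 + ‖y‖) ^ p)
              = (max U 0 * Real.exp (b*R₀)) * (1 + ‖y‖) ^ p * Real.exp (-b*‖y‖) := by ring
          rw [this]
          apply mul_le_mul_of_nonneg_right _ hep.le
          apply mul_le_mul_of_nonneg_right (le_max_left _ _)
          positivity
  · have hy0 : 0 < ‖y‖ := lt_of_lt_of_le hR₀ h
    have hya : ‖y‖ ^ a ≤ max (R₀ ^ a) 1 * (1 + ‖y‖) ^ p := by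
      rcases le_total 0 a with ha | ha
      · have : ‖y‖ ^ a ≤ (1 + ‖y‖) ^ a :=
          Real.rpow_le_rpow hy0.le (by linarith) ha
        have hpa : p = a := max_eq_left ha
        calc ‖y‖ ^ a ≤ (1 + ‖y‖) ^ p := by rw [hpa]; exact this
          _ = 1 * (1 + ‖y‖) ^ p := by ring
          _ ≤ _ := mul_le_mul_of_nonneg_right (le_max_right _ _) (by positivity)
      · have : ‖y‖ ^ a ≤ R₀ ^ a := Real.rpow_le_rpow_of_nonpos hR₀ h ha
        calc ‖y‖ ^ a ≤ R₀ ^ a := this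
          _ = R₀ ^ a * 1 := by ring
          _ ≤ max (R₀ ^ a) 1 * (1 + ‖y‖) ^ p :=
            mul_le_mul (le_max_left _ _) h1p one_pos.le (by positivity)
    calc u y ≤ k₂ * ‖y‖ ^ a * Real.exp (-b * ‖y‖) := hub y h
      _ ≤ k₂ * (max (R₀ ^ a) 1 * (1 + ‖y‖) ^ p) * Real.exp (-b * ‖y‖) := by
          apply mul_le_mul_of_nonneg_right _ hep.le
          exact mul_le_mul_of_nonneg_left hya hk₂.le
      _ = (k₂ * max (R₀ ^ a) 1) * (1 + ‖y‖) ^ p * Real.exp (-b * ‖y‖) := by ring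
      _ ≤ _ := by
          apply mul_le_mul_of_nonneg_right _ hep.le
          exact mul_le_mul_of_nonneg_right (le_max_right _ _) (by positivity)


/-- **Lemma A.1 (i).** Interaction integral of two exponentially decaying radial functions:
the case `b < b′`. -/
theorem interaction_estimate_different_rates
    (N : ℕ) (hN : 1 ≤ N)
    (u v : Euc N → ℝ) (hu : Continuous u) (hv : Continuous v)
    (hupos : ∀ x, 0 < u x) (hvpos : ∀ x, 0 < v x)
    (hurad : Radial u) (hvrad : Radial v)
    (a a' b b' : ℝ) (hb : 0 < b) (hbb' : b < b')
    (R₀ k₁ k₂ : ℝ) (hR₀ : 0 < R₀) (hk₁ : 0 < k₁) (hk₁₂ : k₁ ≤ k₂)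
    (hub : ∀ x : Euc N, R₀ ≤ ‖x‖ →
      k₁ * ‖x‖ ^ a * Real.exp (-b * ‖x‖) ≤ u x ∧ u x ≤ k₂ * ‖x‖ ^ a * Real.exp (-b * ‖x‖))
    (hvb : ∀ x : Euc N, R₀ ≤ ‖x‖ →
      k₁ * ‖x‖ ^ a' * Real.exp (-b' * ‖x‖) ≤ v x ∧ v x ≤ k₂ * ‖x‖ ^ a' * Real.exp (-b' * ‖x‖)) :
    ∃ R, R₀ ≤ R ∧ ∃ c₁ c₂ : ℝ, 0 < c₁ ∧ c₁ ≤ c₂ ∧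
      ∀ ξ : Euc N, R ≤ ‖ξ‖ →
        Integrable (fun x => u (x + ξ) * v x) ∧
        c₁ * Real.exp (-b * ‖ξ‖) * ‖ξ‖ ^ a ≤ (∫ x, u (x + ξ) * v x) ∧
        (∫ x, u (x + ξ) * v x) ≤ c₂ * Real.exp (-b * ‖ξ‖) * ‖ξ‖ ^ a := by
  set p := max a 0 with hp
  set q := max a' 0 with hq
  set β := b' - b with hβdef
  have hβ : 0 < β := by rw [hβdef]; linarith
  have hk₂ : 0 < k₂ := lt_of_lt_of_le hk₁ hk₁₂
  obtain ⟨Ku, hKu, hKub⟩ := aux_global N u hu a b R₀ k₂ hb hR₀ hk₂ (fun x hx => (hub x hx).2)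
  obtain ⟨Kv, hKv, hKvb⟩ := aux_global N v hv a' b' R₀ k₂ (hb.trans hbb') hR₀ hk₂
    (fun x hx => (hvb x hx).2)
  set Ca := max ((2:ℝ)^a) ((2:ℝ)^(-a)) with hCadef
  set ca := min ((2:ℝ)^a) ((2:ℝ)^(-a)) with hcadef
  have hCa0 : 0 < Ca := lt_of_lt_of_le (Real.rpow_pos_of_pos two_pos a) (le_max_left _ _)
  have hca0 : 0 < ca := lt_min (Real.rpow_pos_of_pos two_pos a)
    (Real.rpow_pos_of_pos two_pos (-a))
  obtain ⟨m, hm, hmle⟩ : ∃ m : ℝ, 0 < m ∧ ∀ x ∈ Metric.closedBall (0:Euc N) 1, m ≤ v x := by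
    obtain ⟨x₀, hx₀mem, hx₀⟩ := (isCompact_closedBall (0:Euc N) 1).exists_isMinOn
      ⟨0, by simp⟩ hv.continuousOn
    exact ⟨v x₀, hvpos x₀, fun x hx => hx₀ hx⟩
  obtain ⟨volB, hvol, hvolB⟩ :
      ∃ w : ℝ, 0 < w ∧ (volume (Metric.ball (0:Euc N) 1)).toReal = w :=
    ⟨_, ENNReal.toReal_pos (Metric.measure_ball_pos volume 0 one_pos).ne'
      measure_ball_lt_top.ne, rfl⟩
  obtain ⟨Csup, hCsup0, hCsup⟩ := aux_sup (p + |a|) (β/4) (by linarith)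
  have hMint : Integrable (fun x : Euc N => Real.exp (b*‖x‖) * v x) := by
    refine ((aux_int N q β hβ).const_mul Kv).mono' ?_ (Filter.Eventually.of_forall fun x => ?_)
    · exact ((Real.continuous_exp.comp (continuous_const.mul continuous_norm)).mul
        hv).aestronglyMeasurable
    · rw [Real.norm_of_nonneg (mul_nonneg (Real.exp_pos _).le (hvpos x).le)]
      have h2 := hKvb x
      have hee : Real.exp (b*‖x‖) * Real.exp (-b' * ‖x‖) = Real.exp (-β * ‖x‖) := by
        rw [← Real.exp_add]; congr 1; rw [hβdef]; ring
      calc Real.exp (b*‖x‖) * v x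
          ≤ Real.exp (b*‖x‖) * (Kv * (1 + ‖x‖) ^ q * Real.exp (-b' * ‖x‖)) :=
            mul_le_mul_of_nonneg_left h2 (Real.exp_pos _).le
        _ = Kv * ((1+‖x‖)^q * (Real.exp (b*‖x‖) * Real.exp (-b'*‖x‖))) := by ring
        _ = Kv * ((1+‖x‖)^q * Real.exp (-β*‖x‖)) := by rw [hee]
  obtain ⟨M, hM0, hMeq⟩ : ∃ M : ℝ, 0 ≤ M ∧ (∫ x : Euc N, Real.exp (b*‖x‖) * v x) = M :=
    ⟨_, integral_nonneg (fun x => mul_nonneg (Real.exp_pos _).le (hvpos x).le), rfl⟩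
  have hC2int : Integrable (fun x : Euc N => (1+‖x‖)^(p+q) * Real.exp (-(β/2)*‖x‖)) :=
    aux_int N (p+q) (β/2) (by linarith)
  obtain ⟨C2, hC20, hC2eq⟩ :
      ∃ C2 : ℝ, 0 ≤ C2 ∧ (∫ x : Euc N, (1+‖x‖)^(p+q) * Real.exp (-(β/2)*‖x‖)) = C2 :=
    ⟨_, integral_nonneg (fun x =>
      mul_nonneg (Real.rpow_nonneg (by positivity) _) (Real.exp_pos _).le), rfl⟩
  refine ⟨max (2*R₀+2) 2, le_trans (by linarith) (le_max_left _ _),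
    k₁ * ca * Real.exp (-b) * m * volB,
    max (k₁ * ca * Real.exp (-b) * m * volB) (k₂ * Ca * M + Ku * Kv * Csup * C2),
    mul_pos (mul_pos (mul_pos (mul_pos hk₁ hca0) (Real.exp_pos _)) hm) hvol,
    le_max_left _ _, fun ξ hξ => ?_⟩
  have hξ2 : 2 ≤ ‖ξ‖ := le_trans (le_max_right _ _) hξ
  have hξR : 2*R₀+2 ≤ ‖ξ‖ := le_trans (le_max_left _ _) hξ
  have hξ0 : (0:ℝ) < ‖ξ‖ := by linarith
  have hξ1 : (1:ℝ) ≤ ‖ξ‖ := by linarith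
  have hnl : ∀ x : Euc N, ‖ξ‖ - ‖x‖ ≤ ‖x + ξ‖ := by
    intro x
    have h := norm_sub_le (x + ξ) x
    have h2 : x + ξ - x = ξ := by abel
    rw [h2] at h; linarith
  -- global pointwise bound
  have hG : ∀ x : Euc N, u (x + ξ) * v x ≤
      (Ku * Kv * (1+‖ξ‖)^p * Real.exp (-b*‖ξ‖)) *
        ((1+‖x‖)^(p+q) * Real.exp (-β*‖x‖)) := by
    intro x
    have hxp : (0:ℝ) < 1 + ‖x‖ := by positivity
    have h1 := hKub (x + ξ)
    have h2 := hKvb x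
    have h3 : (1+‖x+ξ‖)^p ≤ (1+‖ξ‖)^p * (1+‖x‖)^p := by
      rw [← Real.mul_rpow (by positivity) (by positivity)]
      apply Real.rpow_le_rpow (by positivity) ?_ (le_max_right a 0)
      have := norm_add_le x ξ
      nlinarith [norm_nonneg x, norm_nonneg ξ]
    have h4 : Real.exp (-b*‖x+ξ‖) ≤ Real.exp (-b*‖ξ‖) * Real.exp (b*‖x‖) := by
      rw [← Real.exp_add]
      apply Real.exp_le_exp.2
      have := hnl x
      nlinarith
    have hu' : u (x+ξ) ≤ Ku * ((1+‖ξ‖)^p * (1+‖x‖)^p) *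
        (Real.exp (-b*‖ξ‖) * Real.exp (b*‖x‖)) := by
      calc u (x+ξ) ≤ Ku * (1+‖x+ξ‖)^p * Real.exp (-b*‖x+ξ‖) := h1
        _ ≤ Ku * ((1+‖ξ‖)^p * (1+‖x‖)^p) * (Real.exp (-b*‖ξ‖) * Real.exp (b*‖x‖)) :=
            mul_le_mul (mul_le_mul_of_nonneg_left h3 hKu.le) h4
              (Real.exp_pos _).le (mul_nonneg hKu.le (by positivity))
    have hpq : (1+‖x‖)^(p+q) = (1+‖x‖)^p * (1+‖x‖)^q := Real.rpow_add hxp p q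
    have hee : Real.exp (-β*‖x‖) = Real.exp (b*‖x‖) * Real.exp (-b'*‖x‖) := by
      rw [← Real.exp_add]; congr 1; rw [hβdef]; ring
    calc u (x+ξ) * v x
        ≤ (Ku * ((1+‖ξ‖)^p * (1+‖x‖)^p) * (Real.exp (-b*‖ξ‖) * Real.exp (b*‖x‖))) *
          (Kv * (1+‖x‖)^q * Real.exp (-b'*‖x‖)) :=
          mul_le_mul hu' h2 (hvpos x).le
            (mul_nonneg (mul_nonneg hKu.le (by positivity)) (by positivity))
      _ = (Ku * Kv * (1+‖ξ‖)^p * Real.exp (-b*‖ξ‖)) *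
          (((1+‖x‖)^p * (1+‖x‖)^q) * (Real.exp (b*‖x‖) * Real.exp (-b'*‖x‖))) := by ring
      _ = (Ku * Kv * (1+‖ξ‖)^p * Real.exp (-b*‖ξ‖)) *
          ((1+‖x‖)^(p+q) * Real.exp (-β*‖x‖)) := by rw [hpq, hee]
  -- integrability
  have hfint : Integrable (fun x : Euc N => u (x + ξ) * v x) := by
    refine ((aux_int N (p+q) β hβ).const_mul
      (Ku * Kv * (1+‖ξ‖)^p * Real.exp (-b*‖ξ‖))).mono' ?_
      (Filter.Eventually.of_forall fun x => ?_)
    · exact ((hu.comp (continuous_id.add continuous_const)).mul hv).aestronglyMeasurable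
    · rw [Real.norm_of_nonneg (mul_nonneg (hupos _).le (hvpos _).le)]
      exact hG x
  refine ⟨hfint, ?_, ?_⟩
  -- lower bound
  · set c := k₁ * (ca * ‖ξ‖^a) * (Real.exp (-b*‖ξ‖) * Real.exp (-b)) * m with hcdef
    have hind_int : Integrable ((Metric.ball (0:Euc N) 1).indicator (fun _ => c)) :=
      (integrableOn_const measure_ball_lt_top.ne).integrable_indicator
        Metric.isOpen_ball.measurableSet
    have hle : ∀ x, (Metric.ball (0:Euc N) 1).indicator (fun _ => c) x ≤ u (x+ξ) * v x := by
      intro x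
      by_cases hx : x ∈ Metric.ball (0:Euc N) 1
      · rw [Set.indicator_of_mem hx]
        have hx1 : ‖x‖ < 1 := mem_ball_zero_iff.1 hx
        have hn1' : ‖ξ‖ - ‖x‖ ≤ ‖x+ξ‖ := hnl x
        have hn2 : ‖x+ξ‖ ≤ ‖ξ‖ + 1 := le_trans (norm_add_le x ξ) (by linarith)
        have hxR₀ : R₀ ≤ ‖x+ξ‖ := by linarith
        have hxipos : (0:ℝ) < ‖x+ξ‖ := by linarith
        have hl := (hub (x+ξ) hxR₀).1
        have hra : ca * ‖ξ‖^a ≤ ‖x+ξ‖^a :=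
          aux_rpow_lb a ‖ξ‖ ‖x+ξ‖ hξ0 (by linarith) (by linarith)
        have hre : Real.exp (-b*‖ξ‖) * Real.exp (-b) ≤ Real.exp (-b*‖x+ξ‖) := by
          rw [← Real.exp_add]
          apply Real.exp_le_exp.2
          nlinarith
        have hm' : m ≤ v x := hmle x (Metric.ball_subset_closedBall hx)
        have hstep : k₁ * (ca * ‖ξ‖^a) * (Real.exp (-b*‖ξ‖) * Real.exp (-b)) ≤
            k₁ * ‖x+ξ‖^a * Real.exp (-b*‖x+ξ‖) :=
          mul_le_mul (mul_le_mul_of_nonneg_left hra hk₁.le) hre (by positivity)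
            (mul_nonneg hk₁.le (Real.rpow_nonneg hxipos.le a))
        calc c ≤ (k₁ * ‖x+ξ‖^a * Real.exp (-b*‖x+ξ‖)) * v x := by
              rw [hcdef]
              exact mul_le_mul hstep hm' hm.le
                (mul_nonneg (mul_nonneg hk₁.le (Real.rpow_nonneg hxipos.le a))
                  (Real.exp_pos _).le)
          _ ≤ u (x+ξ) * v x := mul_le_mul_of_nonneg_right hl (hvpos x).le
      · rw [Set.indicator_of_notMem hx]
        exact mul_nonneg (hupos _).le (hvpos _).le
    calc k₁ * ca * Real.exp (-b) * m * volB * Real.exp (-b*‖ξ‖) * ‖ξ‖^a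
        = (volume (Metric.ball (0:Euc N) 1)).toReal • c := by
          rw [smul_eq_mul, hvolB, hcdef]; ring
      _ = ∫ x, (Metric.ball (0:Euc N) 1).indicator (fun _ => c) x :=
          (integral_indicator_const c Metric.isOpen_ball.measurableSet).symm
      _ ≤ ∫ x, u (x+ξ) * v x := integral_mono hind_int hfint hle
  -- upper bound
  · have hg₁int : Integrable (fun x : Euc N =>
        (k₂ * Ca * ‖ξ‖^a * Real.exp (-b*‖ξ‖)) * (Real.exp (b*‖x‖) * v x)) :=
      hMint.const_mul _
    have hg₂int : Integrable (fun x : Euc N =>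
        (Ku * Kv * (1+‖ξ‖)^p * Real.exp (-b*‖ξ‖) * Real.exp (-(β/4)*‖ξ‖)) *
          ((1+‖x‖)^(p+q) * Real.exp (-(β/2)*‖x‖))) :=
      hC2int.const_mul _
    have hg₁0 : ∀ x : Euc N, 0 ≤
        (k₂ * Ca * ‖ξ‖^a * Real.exp (-b*‖ξ‖)) * (Real.exp (b*‖x‖) * v x) := fun x =>
      mul_nonneg
        (mul_nonneg (mul_nonneg (mul_nonneg hk₂.le hCa0.le) (Real.rpow_nonneg hξ0.le a))
          (Real.exp_pos _).le)
        (mul_nonneg (Real.exp_pos _).le (hvpos x).le)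
    have hg₂0 : ∀ x : Euc N, 0 ≤
        (Ku * Kv * (1+‖ξ‖)^p * Real.exp (-b*‖ξ‖) * Real.exp (-(β/4)*‖ξ‖)) *
          ((1+‖x‖)^(p+q) * Real.exp (-(β/2)*‖x‖)) := fun x =>
      mul_nonneg
        (mul_nonneg (mul_nonneg (mul_nonneg (mul_nonneg hKu.le hKv.le)
          (Real.rpow_nonneg (by positivity) _)) (Real.exp_pos _).le) (Real.exp_pos _).le)
        (mul_nonneg (Real.rpow_nonneg (by positivity) _) (Real.exp_pos _).le)
    have hsplit : ∀ x : Euc N, u (x+ξ) * v x ≤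
        (k₂ * Ca * ‖ξ‖^a * Real.exp (-b*‖ξ‖)) * (Real.exp (b*‖x‖) * v x) +
        (Ku * Kv * (1+‖ξ‖)^p * Real.exp (-b*‖ξ‖) * Real.exp (-(β/4)*‖ξ‖)) *
          ((1+‖x‖)^(p+q) * Real.exp (-(β/2)*‖x‖)) := by
      intro x
      rcases le_total ‖x‖ (‖ξ‖/2) with hx | hx
      · have hn1 : ‖ξ‖/2 ≤ ‖x+ξ‖ := by linarith [hnl x]
        have hn2 : ‖x+ξ‖ ≤ 2*‖ξ‖ := le_trans (norm_add_le x ξ) (by linarith)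
        have hxR₀ : R₀ ≤ ‖x+ξ‖ := by linarith
        have h1 := (hub (x+ξ) hxR₀).2
        have hra : ‖x+ξ‖^a ≤ Ca * ‖ξ‖^a := aux_rpow_ub a ‖ξ‖ ‖x+ξ‖ hξ0 hn1 hn2
        have hre : Real.exp (-b*‖x+ξ‖) ≤ Real.exp (-b*‖ξ‖) * Real.exp (b*‖x‖) := by
          rw [← Real.exp_add]
          apply Real.exp_le_exp.2
          nlinarith [hnl x]
        have hone : u (x+ξ) * v x ≤
            (k₂ * Ca * ‖ξ‖^a * Real.exp (-b*‖ξ‖)) * (Real.exp (b*‖x‖) * v x) := by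
          calc u (x+ξ) * v x ≤ (k₂ * ‖x+ξ‖^a * Real.exp (-b*‖x+ξ‖)) * v x :=
              mul_le_mul_of_nonneg_right h1 (hvpos x).le
            _ ≤ (k₂ * (Ca * ‖ξ‖^a) * (Real.exp (-b*‖ξ‖) * Real.exp (b*‖x‖))) * v x := by
                apply mul_le_mul_of_nonneg_right _ (hvpos x).le
                exact mul_le_mul (mul_le_mul_of_nonneg_left hra hk₂.le) hre
                  (Real.exp_pos _).le
                  (mul_nonneg hk₂.le (mul_nonneg hCa0.le (Real.rpow_nonneg hξ0.le a)))
            _ = (k₂ * Ca * ‖ξ‖^a * Real.exp (-b*‖ξ‖)) * (Real.exp (b*‖x‖) * v x) := by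
                ring
        exact le_trans hone (le_add_of_nonneg_right (hg₂0 x))
      · have hre : Real.exp (-β*‖x‖) ≤ Real.exp (-(β/4)*‖ξ‖) * Real.exp (-(β/2)*‖x‖) := by
          rw [← Real.exp_add]
          apply Real.exp_le_exp.2
          nlinarith
        have htwo : u (x+ξ) * v x ≤
            (Ku * Kv * (1+‖ξ‖)^p * Real.exp (-b*‖ξ‖) * Real.exp (-(β/4)*‖ξ‖)) *
              ((1+‖x‖)^(p+q) * Real.exp (-(β/2)*‖x‖)) := by
          calc u (x+ξ) * v x
              ≤ (Ku * Kv * (1+‖ξ‖)^p * Real.exp (-b*‖ξ‖)) *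
                ((1+‖x‖)^(p+q) * Real.exp (-β*‖x‖)) := hG x
            _ ≤ (Ku * Kv * (1+‖ξ‖)^p * Real.exp (-b*‖ξ‖)) *
                ((1+‖x‖)^(p+q) * (Real.exp (-(β/4)*‖ξ‖) * Real.exp (-(β/2)*‖x‖))) := by
                apply mul_le_mul_of_nonneg_left _
                  (mul_nonneg (mul_nonneg (mul_nonneg hKu.le hKv.le)
                    (Real.rpow_nonneg (by positivity) _)) (Real.exp_pos _).le)
                exact mul_le_mul_of_nonneg_left hre (Real.rpow_nonneg (by positivity) _)
            _ = _ := by ring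
        exact le_trans htwo (le_add_of_nonneg_left (hg₁0 x))
    have hint1 : (∫ x : Euc N,
        (k₂ * Ca * ‖ξ‖^a * Real.exp (-b*‖ξ‖)) * (Real.exp (b*‖x‖) * v x)) =
        (k₂ * Ca * ‖ξ‖^a * Real.exp (-b*‖ξ‖)) * M := by
      rw [integral_const_mul, hMeq]
    have hint2 : (∫ x : Euc N,
        (Ku * Kv * (1+‖ξ‖)^p * Real.exp (-b*‖ξ‖) * Real.exp (-(β/4)*‖ξ‖)) *
          ((1+‖x‖)^(p+q) * Real.exp (-(β/2)*‖x‖))) =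
        (Ku * Kv * (1+‖ξ‖)^p * Real.exp (-b*‖ξ‖) * Real.exp (-(β/4)*‖ξ‖)) * C2 := by
      rw [integral_const_mul, hC2eq]
    have hkey : (1+‖ξ‖)^p * Real.exp (-(β/4)*‖ξ‖) ≤ Csup * ‖ξ‖^a := by
      have h5 := hCsup ‖ξ‖ (norm_nonneg ξ)
      have hbase : (0:ℝ) < 1 + ‖ξ‖ := by positivity
      have h6 : (1+‖ξ‖)^p = (1+‖ξ‖)^(p+|a|) * (1+‖ξ‖)^(-|a|) := by
        rw [← Real.rpow_add hbase, add_neg_cancel_right]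
      have h7 : (1+‖ξ‖)^(-|a|) ≤ ‖ξ‖^a := by
        calc (1+‖ξ‖)^(-|a|) ≤ ‖ξ‖^(-|a|) :=
            Real.rpow_le_rpow_of_nonpos hξ0 (by linarith) (neg_nonpos.2 (abs_nonneg a))
          _ ≤ ‖ξ‖^a := Real.rpow_le_rpow_of_exponent_le hξ1 (neg_abs_le a)
      calc (1+‖ξ‖)^p * Real.exp (-(β/4)*‖ξ‖)
          = ((1+‖ξ‖)^(p+|a|) * Real.exp (-(β/4)*‖ξ‖)) * (1+‖ξ‖)^(-|a|) := by
            rw [h6]; ring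
        _ ≤ Csup * ‖ξ‖^a :=
            mul_le_mul h5 h7 (Real.rpow_nonneg (by positivity) _) hCsup0.le
    calc ∫ x, u (x+ξ) * v x
        ≤ ∫ x : Euc N,
          ((k₂ * Ca * ‖ξ‖^a * Real.exp (-b*‖ξ‖)) * (Real.exp (b*‖x‖) * v x) +
          (Ku * Kv * (1+‖ξ‖)^p * Real.exp (-b*‖ξ‖) * Real.exp (-(β/4)*‖ξ‖)) *
            ((1+‖x‖)^(p+q) * Real.exp (-(β/2)*‖x‖))) :=
          integral_mono hfint (hg₁int.add hg₂int) hsplit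
      _ = (∫ x : Euc N, (k₂ * Ca * ‖ξ‖^a * Real.exp (-b*‖ξ‖)) *
            (Real.exp (b*‖x‖) * v x)) +
          ∫ x : Euc N, (Ku * Kv * (1+‖ξ‖)^p * Real.exp (-b*‖ξ‖) *
            Real.exp (-(β/4)*‖ξ‖)) * ((1+‖x‖)^(p+q) * Real.exp (-(β/2)*‖x‖)) :=
          integral_add hg₁int hg₂int
      _ = (k₂ * Ca * M) * (Real.exp (-b*‖ξ‖) * ‖ξ‖^a) +
          (Ku * Kv * C2) * (((1+‖ξ‖)^p * Real.exp (-(β/4)*‖ξ‖)) * Real.exp (-b*‖ξ‖)) := by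
          rw [hint1, hint2]; ring
      _ ≤ (k₂ * Ca * M) * (Real.exp (-b*‖ξ‖) * ‖ξ‖^a) +
          (Ku * Kv * C2) * ((Csup * ‖ξ‖^a) * Real.exp (-b*‖ξ‖)) := by
          apply add_le_add_right
          apply mul_le_mul_of_nonneg_left _
            (mul_nonneg (mul_nonneg hKu.le hKv.le) hC20)
          exact mul_le_mul_of_nonneg_right hkey (Real.exp_pos _).le
      _ = (k₂ * Ca * M + Ku * Kv * Csup * C2) * Real.exp (-b*‖ξ‖) * ‖ξ‖^a := by ring
      _ ≤ max (k₁ * ca * Real.exp (-b) * m * volB) (k₂ * Ca * M + Ku * Kv * Csup * C2) *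
          Real.exp (-b*‖ξ‖) * ‖ξ‖^a := by
          apply mul_le_mul_of_nonneg_right _ (Real.rpow_nonneg hξ0.le a)
          exact mul_le_mul_of_nonneg_right (le_max_right _ _) (Real.exp_pos _).le
end
end

section
/- Let N ∈ {2,3} and let A > 0, B > 0, ω₀ > 0 and s ∈ (0, 1] be real constants. Then there exists ε₀ ∈ (0, 1) such that for every ε ∈ (0, ε₀) there exists d_ε ∈ (0, 1/(√ω₀·s)) with A·ε²·d_ε·|log ε| = B·e^{−2√ω₀·s·d_ε·|log ε|}·(d_ε·|log ε|)^{−(N−1)/2}, and moreover d_ε → 1/(√ω₀·s) as ε → 0⁺. -/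
noncomputable section

open Real Filter Set

/-- **The balance equation.** For `N ∈ {2,3}`, `A, B, ω₀ > 0` and `s ∈ (0,1]`, for every small
`ε > 0` there is `d_ε ∈ (0, 1/(√ω₀·s))` solving
`A·ε²·d_ε·|log ε| = B·e^{-2√ω₀·s·d_ε·|log ε|}·(d_ε·|log ε|)^{-(N-1)/2}`,
and `d_ε → 1/(√ω₀·s)` as `ε → 0⁺`. -/
theorem balance_equation_solvable
    (N : ℕ) (hN : N = 2 ∨ N = 3)
    (A B ω₀ s : ℝ) (hA : 0 < A) (hB : 0 < B) (hω₀ : 0 < ω₀)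
    (hs : 0 < s) (hs1 : s ≤ 1) :
    ∃ ε₀ : ℝ, 0 < ε₀ ∧ ε₀ < 1 ∧ ∃ d : ℝ → ℝ,
      (∀ ε ∈ Set.Ioo (0 : ℝ) ε₀,
        d ε ∈ Set.Ioo (0 : ℝ) (1 / (Real.sqrt ω₀ * s)) ∧
        A * ε ^ 2 * d ε * |Real.log ε|
          = B * Real.exp (-2 * Real.sqrt ω₀ * s * d ε * |Real.log ε|)
              * (d ε * |Real.log ε|) ^ (-(((N : ℝ) - 1) / 2))) ∧
      Filter.Tendsto d (nhdsWithin 0 (Set.Ioi 0)) (nhds (1 / (Real.sqrt ω₀ * s))) := by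
  have hc0 : 0 < Real.sqrt ω₀ * s := mul_pos (Real.sqrt_pos.mpr hω₀) hs
  set c : ℝ := Real.sqrt ω₀ * s with hcdef
  set p : ℝ := ((N : ℝ) - 1) / 2 with hpdef
  have hp : 0 < p := by rcases hN with h | h <;> simp [hpdef, h] <;> norm_num
  have hq : 0 < 1 + p := by linarith
  set φ : ℝ → ℝ := fun t => t ^ (1 + p) * Real.exp (2 * c * t) with hφdef
  have hφcont : Continuous φ := by
    apply Continuous.mul
    · exact continuous_iff_continuousAt.mpr fun x =>
        Real.continuousAt_rpow_const x _ (Or.inr hq.le)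
    · exact Real.continuous_exp.comp (continuous_const.mul continuous_id)
  have hφ0 : φ 0 = 0 := by simp [hφdef, Real.zero_rpow hq.ne']
  have hφmono : StrictMonoOn φ (Ici 0) := by
    intro a ha b hb hab
    have h1 : a ^ (1 + p) < b ^ (1 + p) := Real.rpow_lt_rpow ha hab hq
    have h2 : Real.exp (2 * c * a) ≤ Real.exp (2 * c * b) := by
      apply Real.exp_le_exp.mpr; nlinarith
    exact mul_lt_mul h1 h2 (Real.exp_pos _)
      (Real.rpow_nonneg (le_trans ha hab.le) _)
  -- |log ε| → ∞ as ε → 0⁺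
  have hLtop : Tendsto (fun ε : ℝ => |Real.log ε|) (nhdsWithin 0 (Ioi 0)) atTop := by
    have h1 : Tendsto (fun ε : ℝ => -Real.log ε) (nhdsWithin 0 (Ioi 0)) atTop :=
      tendsto_neg_atBot_atTop.comp Real.tendsto_log_nhdsGT_zero
    apply h1.congr'
    have hev1 : ∀ᶠ ε : ℝ in nhdsWithin 0 (Ioi 0), 0 < ε := eventually_mem_nhdsWithin
    have hev2 : ∀ᶠ ε : ℝ in nhdsWithin 0 (Ioi 0), ε < 1 :=
      (eventually_lt_nhds one_pos).filter_mono nhdsWithin_le_nhds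
    filter_upwards [hev1, hev2] with ε hε hε1
    rw [abs_of_nonpos (Real.log_nonpos hε.le hε1.le)]
  -- existence of a root for suitable ε
  have key : ∀ ε : ℝ, 0 < ε → ε < 1 → B < A * ((|Real.log ε|) / c) ^ (1 + p) →
      ∃ x ∈ Ioo (0 : ℝ) (1 / c), A * ε ^ 2 * φ (x * |Real.log ε|) = B := by
    intro ε hε hε1 hBig
    set L := |Real.log ε| with hLdef
    have hlogneg : Real.log ε < 0 := Real.log_neg hε hε1
    have hL : 0 < L := abs_pos.mpr hlogneg.ne
    have hlog : Real.log ε = -L := by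
      rw [hLdef, abs_of_nonpos hlogneg.le, neg_neg]
    have hεexp : ε = Real.exp (-L) := by rw [← hlog, Real.exp_log hε]
    have hcont : ContinuousOn (fun x : ℝ => A * ε ^ 2 * φ (x * L)) (Icc 0 (1 / c)) :=
      (continuous_const.mul (hφcont.comp (continuous_id.mul continuous_const))).continuousOn
    have h0 : A * ε ^ 2 * φ ((0 : ℝ) * L) = 0 := by simp [hφ0]
    have hexp1 : ε ^ 2 * Real.exp (2 * c * (1 / c * L)) = 1 := by
      have hcL : 2 * c * (1 / c * L) = 2 * L := by field_simp
      rw [hcL]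
      conv_lhs => rw [hεexp]
      rw [sq, ← Real.exp_add, ← Real.exp_add]
      have hz : -L + -L + 2 * L = (0:ℝ) := by ring
      rw [hz, Real.exp_zero]
    have h1 : A * ε ^ 2 * φ ((1 / c) * L) = A * (L / c) ^ (1 + p) := by
      simp only [hφdef]
      have : (1 / c) * L = L / c := by ring
      rw [this]
      calc A * ε ^ 2 * ((L / c) ^ (1 + p) * Real.exp (2 * c * (L / c)))
          = A * (L / c) ^ (1 + p) * (ε ^ 2 * Real.exp (2 * c * (1 / c * L))) := by
            rw [show (1 / c * L) = L / c by ring]; ring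
        _ = A * (L / c) ^ (1 + p) := by rw [hexp1, mul_one]
    have hmem : B ∈ Ioo ((fun x : ℝ => A * ε ^ 2 * φ (x * L)) 0)
        ((fun x : ℝ => A * ε ^ 2 * φ (x * L)) (1 / c)) := by
      simp only []
      rw [h0, h1]
      exact ⟨hB, hBig⟩
    have hsub := intermediate_value_Ioo (le_of_lt (by positivity : (0 : ℝ) < 1 / c)) hcont
    obtain ⟨x, hx, hfx⟩ := hsub hmem
    exact ⟨x, hx, hfx⟩
  -- eventual conditions
  have hEv : ∀ᶠ ε : ℝ in nhdsWithin 0 (Ioi 0),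
      0 < ε ∧ ε < 1 ∧ B < A * ((|Real.log ε|) / c) ^ (1 + p) := by
    have hev1 : ∀ᶠ ε : ℝ in nhdsWithin 0 (Ioi 0), 0 < ε := eventually_mem_nhdsWithin
    have hev2 : ∀ᶠ ε : ℝ in nhdsWithin 0 (Ioi 0), ε < 1 :=
      (eventually_lt_nhds one_pos).filter_mono nhdsWithin_le_nhds
    have htend : Tendsto (fun ε : ℝ => A * ((|Real.log ε|) / c) ^ (1 + p))
        (nhdsWithin 0 (Ioi 0)) atTop :=
      Tendsto.const_mul_atTop hA
        ((tendsto_rpow_atTop hq).comp (hLtop.atTop_div_const hc0))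
    have hev3 := htend.eventually_gt_atTop B
    filter_upwards [hev1, hev2, hev3] with ε h1 h2 h3
    exact ⟨h1, h2, h3⟩
  rw [Filter.eventually_iff, mem_nhdsGT_iff_exists_Ioo_subset] at hEv
  obtain ⟨u, hu, hsubset⟩ := hEv
  set ε₀ : ℝ := min u (1 / 2) with hε₀def
  have hε₀pos : 0 < ε₀ := lt_min hu (by norm_num)
  have hε₀lt1 : ε₀ < 1 := lt_of_le_of_lt (min_le_right _ _) (by norm_num)
  have hIoo : Ioo (0 : ℝ) ε₀ ⊆ Ioo 0 u := Ioo_subset_Ioo le_rfl (min_le_left _ _)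
  have hroot : ∀ ε ∈ Ioo (0 : ℝ) ε₀,
      ∃ x ∈ Ioo (0 : ℝ) (1 / c), A * ε ^ 2 * φ (x * |Real.log ε|) = B := by
    intro ε hε
    obtain ⟨h1, h2, h3⟩ := hsubset (hIoo hε)
    exact key ε h1 h2 h3
  set d : ℝ → ℝ := fun ε =>
    if h : ε ∈ Ioo (0 : ℝ) ε₀ then (hroot ε h).choose else 1 / c with hddef
  have dspec : ∀ ε (h : ε ∈ Ioo (0 : ℝ) ε₀),
      d ε ∈ Ioo (0 : ℝ) (1 / c) ∧ A * ε ^ 2 * φ (d ε * |Real.log ε|) = B := by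
    intro ε h
    have : d ε = (hroot ε h).choose := dif_pos h
    rw [this]
    exact ⟨(hroot ε h).choose_spec.1, (hroot ε h).choose_spec.2⟩
  -- conversion of the equation
  have conv : ∀ ε ∈ Ioo (0 : ℝ) ε₀,
      A * ε ^ 2 * d ε * |Real.log ε|
        = B * Real.exp (-2 * Real.sqrt ω₀ * s * d ε * |Real.log ε|)
            * (d ε * |Real.log ε|) ^ (-(((N : ℝ) - 1) / 2)) := by
    intro ε hε
    obtain ⟨⟨hd0, hd1⟩, heq⟩ := dspec ε hε
    have hε1 : ε < 1 := lt_trans hε.2 hε₀lt1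
    have hlogneg : Real.log ε < 0 := Real.log_neg hε.1 hε1
    have hL : 0 < |Real.log ε| := abs_pos.mpr hlogneg.ne
    have ht : 0 < d ε * |Real.log ε| := mul_pos hd0 hL
    have hsplit : (d ε * |Real.log ε|) ^ (1 + p)
        = (d ε * |Real.log ε|) * (d ε * |Real.log ε|) ^ p := by
      rw [Real.rpow_add ht, Real.rpow_one]
    simp only [hφdef] at heq
    rw [hsplit] at heq
    have harg : -2 * Real.sqrt ω₀ * s * d ε * |Real.log ε|
        = -(2 * c * (d ε * |Real.log ε|)) := by rw [hcdef]; ring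
    rw [show (-(((N : ℝ) - 1) / 2)) = -p from by rw [hpdef], harg,
      Real.exp_neg, Real.rpow_neg ht.le]
    have htp : (0 : ℝ) < (d ε * |Real.log ε|) ^ p := Real.rpow_pos_of_pos ht p
    have hE : (0 : ℝ) < Real.exp (2 * c * (d ε * |Real.log ε|)) := Real.exp_pos _
    field_simp
    linear_combination (norm := ring_nf) heq
  refine ⟨ε₀, hε₀pos, hε₀lt1, d, fun ε hε => ⟨(dspec ε hε).1, conv ε hε⟩, ?_⟩
  -- convergence
  rw [Metric.tendsto_nhds]
  intro δ hδ
  have hmemIoo : ∀ᶠ ε : ℝ in nhdsWithin 0 (Ioi 0), ε ∈ Ioo (0 : ℝ) ε₀ :=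
    Filter.eventually_of_mem (Ioo_mem_nhdsGT_of_mem ⟨le_refl _, hε₀pos⟩) fun _ hx => hx
  by_cases hcase : 1 / c - δ ≤ 0
  · filter_upwards [hmemIoo] with ε hε
    obtain ⟨⟨hd0, hd1⟩, _⟩ := dspec ε hε
    rw [Real.dist_eq, abs_of_neg (by linarith : d ε - 1 / c < 0)]
    linarith
  · push_neg at hcase
    set r : ℝ := 1 / c - δ with hrdef
    have hr : 0 < r := hcase
    have hcδ : 0 < 2 * c * δ := by positivity
    have hcomp : Tendsto (fun ε : ℝ => A * r ^ (1 + p) *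
        ((|Real.log ε|) ^ (1 + p) * Real.exp (-(2 * c * δ) * |Real.log ε|)))
        (nhdsWithin 0 (Ioi 0)) (nhds (A * r ^ (1 + p) * 0)) :=
      (((tendsto_rpow_mul_exp_neg_mul_atTop_nhds_zero (1 + p) (2 * c * δ) hcδ).comp
        hLtop).const_mul _)
    rw [mul_zero] at hcomp
    have hlt := hcomp.eventually_lt_const hB
    have heveq : ∀ᶠ ε : ℝ in nhdsWithin 0 (Ioi 0),
        A * ε ^ 2 * φ (r * |Real.log ε|)
          = A * r ^ (1 + p) *
              ((|Real.log ε|) ^ (1 + p) * Real.exp (-(2 * c * δ) * |Real.log ε|)) := by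
      filter_upwards [hmemIoo] with ε hε
      have hε1 : ε < 1 := lt_trans hε.2 hε₀lt1
      have hlogneg : Real.log ε < 0 := Real.log_neg hε.1 hε1
      have hL : 0 < |Real.log ε| := abs_pos.mpr hlogneg.ne
      have hlog : Real.log ε = -|Real.log ε| := by
        rw [abs_of_nonpos hlogneg.le, neg_neg]
      have hεexp : ε = Real.exp (-|Real.log ε|) := by rw [← hlog, Real.exp_log hε.1]
      have hε2 : ε ^ 2 = Real.exp (-(2 : ℝ) * |Real.log ε|) := by
        conv_lhs => rw [hεexp]
        rw [sq, ← Real.exp_add]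
        congr 1
        ring
      simp only [hφdef]
      rw [Real.mul_rpow hr.le (abs_nonneg _)]
      have hexpeq : ε ^ 2 * Real.exp (2 * c * (r * |Real.log ε|))
          = Real.exp (-(2 * c * δ) * |Real.log ε|) := by
        rw [hε2, ← Real.exp_add]
        congr 1
        have hcne : c ≠ 0 := hc0.ne'
        rw [hrdef]
        field_simp
        ring
      calc A * ε ^ 2 * (r ^ (1 + p) * (|Real.log ε|) ^ (1 + p) *
              Real.exp (2 * c * (r * |Real.log ε|)))
          = A * r ^ (1 + p) * ((|Real.log ε|) ^ (1 + p) *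
              (ε ^ 2 * Real.exp (2 * c * (r * |Real.log ε|)))) := by ring
        _ = _ := by rw [hexpeq]
    filter_upwards [hmemIoo, hlt, heveq] with ε hε hltε heqε
    obtain ⟨⟨hd0, hd1⟩, heq⟩ := dspec ε hε
    have hε1 : ε < 1 := lt_trans hε.2 hε₀lt1
    have hL : 0 < |Real.log ε| := abs_pos.mpr (Real.log_neg hε.1 hε1).ne
    have hfr : A * ε ^ 2 * φ (r * |Real.log ε|) < B := by rw [heqε]; exact hltε
    have hrd : r < d ε := by
      by_contra hcon
      push_neg at hcon
      have hle : A * ε ^ 2 * φ (d ε * |Real.log ε|) ≤ A * ε ^ 2 * φ (r * |Real.log ε|) := by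
        rcases eq_or_lt_of_le hcon with h | h
        · rw [h]
        · have hmono := hφmono (mul_nonneg hd0.le hL.le) (mul_nonneg hr.le hL.le)
            (mul_lt_mul_of_pos_right h hL)
          have hA2 : 0 < A * ε ^ 2 := mul_pos hA (pow_pos hε.1 2)
          exact le_of_lt (by nlinarith)
      rw [heq] at hle
      linarith
    rw [Real.dist_eq, abs_of_neg (by linarith : d ε - 1 / c < 0)]
    rw [hrdef] at hrd
    linarith
end
end
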